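/- A subset of a locally compact Abelian topological group is Haar-open if and only if it has non-empty interior. -/

import Mathlib

open Topology

/-- A subset `A` of a topological Abelian group is *Haar-open* if for every compact `K` and every
`p ∈ K` there is `y` such that `K ∩ (A + y)` is a neighborhood of `p` in `K`, where
`A + y = {z | z - y ∈ A}`. -/
def IsHaarOpen {X : Type*} [TopologicalSpace X] [AddCommGroup X] (A : Set X) : Prop :=
  ∀ K : Set X, IsCompact K → ∀ p ∈ K, ∃ y : X, K ∩ {z | z - y ∈ A} ∈ 𝓝[K] p

/-- A subset of a locally compact Abelian topological group is Haar-open iff it has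
non-empty interior. -/
theorem statement2 {X : Type*} [TopologicalSpace X] [AddCommGroup X] [IsTopologicalAddGroup X]
    [LocallyCompactSpace X] [T2Space X] (A : Set X) :
    IsHaarOpen A ↔ (interior A).Nonempty := by
  constructor
  · intro h
    obtain ⟨K, hK, hKn⟩ := exists_compact_mem_nhds (0 : X)
    obtain ⟨y, hy⟩ := h K hK 0 (mem_of_mem_nhds hKn)
    rw [nhdsWithin_eq_nhds.2 hKn] at hy
    have h1 : {z : X | z - y ∈ A} ∈ 𝓝 (0 : X) :=
      Filter.mem_of_superset hy Set.inter_subset_right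
    have h2 : A ∈ 𝓝 (-y) := by
      have hc : ContinuousAt (fun w : X => w + y) (-y) :=
        (continuous_add_right y).continuousAt
      have := hc.preimage_mem_nhds (by simpa using h1)
      simpa [Set.preimage, add_sub_cancel_right] using this
    exact ⟨-y, mem_interior_iff_mem_nhds.2 h2⟩
  · rintro ⟨u, hu⟩
    intro K hK p hp
    refine ⟨p - u, ?_⟩
    have h1 : {z : X | z - (p - u) ∈ A} ∈ 𝓝 p := by
      have hc : ContinuousAt (fun z : X => z - (p - u)) p :=
        (continuous_sub_right (p - u)).continuousAt
      have : A ∈ 𝓝 (p - (p - u)) := by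
        simpa using mem_interior_iff_mem_nhds.1 hu
      exact hc.preimage_mem_nhds this
    exact Filter.inter_mem self_mem_nhdsWithin (mem_nhdsWithin_of_mem_nhds h1)
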